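/- Fix K ∈ ℝ, N > 1, δ > 0 and t ∈ [0,1]. Then, as λ → 0⁺, one has τ_{K−δ,N}^{(t)}(λ) = τ_{K,N}^{(t)}(λ) − t(1−t²)(δ/(6N))λ² + o(λ²); that is, (τ_{K−δ,N}^{(t)}(λ) − τ_{K,N}^{(t)}(λ) + t(1−t²)(δ/(6N))λ²)/λ² → 0 as λ → 0⁺. -/

import Mathlib

/-- Distortion coefficient `σ_Λ^{(t)}(θ)`. -/
noncomputable def sigmaCoeff (Λ t θ : ℝ) : ℝ :=
  if Λ * θ ^ 2 = 0 then t
  else if 0 < Λ * θ ^ 2 then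
    Real.sin (t * (θ * Real.sqrt Λ)) / Real.sin (θ * Real.sqrt Λ)
  else
    Real.sinh (t * (θ * Real.sqrt (-Λ))) / Real.sinh (θ * Real.sqrt (-Λ))

/-- Distortion coefficient `τ_{K,N}^{(t)}(θ) = t^{1/N} (σ_{K/(N-1)}^{(t)}(θ))^{1-1/N}`. -/
noncomputable def tauCoeff (K N t θ : ℝ) : ℝ :=
  t ^ (1 / N) * (sigmaCoeff (K / (N - 1)) t θ) ^ (1 - 1 / N)


open Real Filter Set

lemma slope0 {f : ℝ → ℝ} {d : ℝ} (hf : HasDerivAt f d 0) (h0 : f 0 = 0) :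
    Tendsto (fun x => f x / x) (nhdsWithin 0 {(0:ℝ)}ᶜ) (nhds d) := by
  have h := hasDerivAt_iff_tendsto_slope.mp hf
  refine h.congr fun x => ?_
  simp [slope_def_field, h0]

lemma tendsto_sin_mul_div (t : ℝ) :
    Tendsto (fun x => Real.sin (t * x) / x) (nhdsWithin 0 {(0:ℝ)}ᶜ) (nhds t) := by
  have h : HasDerivAt (fun x : ℝ => Real.sin (t * x)) t 0 := by
    have := (Real.hasDerivAt_sin (t * 0)).comp 0 ((hasDerivAt_id (0:ℝ)).const_mul t)
    simpa [Function.comp_def] using this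
  exact slope0 h (by simp)

lemma tendsto_sinh_mul_div (t : ℝ) :
    Tendsto (fun x => Real.sinh (t * x) / x) (nhdsWithin 0 {(0:ℝ)}ᶜ) (nhds t) := by
  have h : HasDerivAt (fun x : ℝ => Real.sinh (t * x)) t 0 := by
    have := (Real.hasDerivAt_sinh (t * 0)).comp 0 ((hasDerivAt_id (0:ℝ)).const_mul t)
    simpa [Function.comp_def] using this
  exact slope0 h (by simp)

lemma cubic_sin (t : ℝ) :
    Tendsto (fun x => (Real.sin (t * x) - t * Real.sin x) / x ^ 3)
      (nhdsWithin 0 (Set.Ioi 0)) (nhds (t * (1 - t ^ 2) / 6)) := by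
  have hle : nhdsWithin (0:ℝ) (Set.Ioi 0) ≤ nhdsWithin 0 {(0:ℝ)}ᶜ :=
    nhdsWithin_mono 0 (fun x hx => ne_of_gt hx)
  -- second-level limit
  have h2 : Tendsto (fun x => (-(t ^ 2 * Real.sin (t * x)) + t * Real.sin x) / (6 * x))
      (nhdsWithin 0 (Set.Ioi 0)) (nhds ((t * (1 - t ^ 2)) / 6)) := by
    have h := ((((tendsto_sin_mul_div t).const_mul (-(t^2))).add
      ((tendsto_sin_mul_div 1).const_mul t)).div_const 6).mono_left hle
    have he : ∀ᶠ x in nhdsWithin (0:ℝ) (Set.Ioi 0),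
        (-(t^2) * (Real.sin (t * x) / x) + t * (Real.sin (1 * x) / x)) / 6
          = (-(t ^ 2 * Real.sin (t * x)) + t * Real.sin x) / (6 * x) :=
      eventually_nhdsWithin_of_forall fun x hx => by
        have hx' : x ≠ 0 := ne_of_gt hx
        rw [one_mul]; field_simp
    have hv : (-(t^2) * t + t * 1) / 6 = (t * (1 - t ^ 2)) / 6 := by ring
    rw [← hv]
    exact h.congr' he
  -- first L'Hôpital: f' / g'
  have hf'' : ∀ x : ℝ, HasDerivAt (fun y => t * Real.cos (t * y) - t * Real.cos y)
      (-(t ^ 2 * Real.sin (t * x)) + t * Real.sin x) x := by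
    intro x
    have h1 : HasDerivAt (fun y : ℝ => Real.cos (t * y)) (-Real.sin (t * x) * t) x :=
      (Real.hasDerivAt_cos (t * x)).comp x ((hasDerivAt_id x).const_mul t) |>.congr_deriv (by ring)
    have := (h1.const_mul t).sub ((Real.hasDerivAt_cos x).const_mul t)
    exact this.congr_deriv (by ring)
  have hg'' : ∀ x : ℝ, HasDerivAt (fun y : ℝ => 3 * y ^ 2) (6 * x) x := by
    intro x
    have := (hasDerivAt_pow 2 x).const_mul (3:ℝ)
    exact this.congr_deriv (by norm_num; ring)
  have h1 : Tendsto (fun x => (t * Real.cos (t * x) - t * Real.cos x) / (3 * x ^ 2))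
      (nhdsWithin 0 (Set.Ioi 0)) (nhds ((t * (1 - t ^ 2)) / 6)) := by
    apply HasDerivAt.lhopital_zero_nhdsGT
      (Filter.Eventually.of_forall hf'') (Filter.Eventually.of_forall hg'')
    · exact eventually_nhdsWithin_of_forall fun x hx => by have : (0:ℝ) < x := hx; positivity
    · have : Continuous fun y : ℝ => t * Real.cos (t * y) - t * Real.cos y := by continuity
      have h0 := (this.tendsto 0).mono_left
        (nhdsWithin_le_nhds : nhdsWithin (0:ℝ) (Set.Ioi 0) ≤ nhds 0)
      simpa using h0
    · have : Continuous fun y : ℝ => 3 * y ^ 2 := by continuity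
      have h0 := (this.tendsto 0).mono_left
        (nhdsWithin_le_nhds : nhdsWithin (0:ℝ) (Set.Ioi 0) ≤ nhds 0)
      simpa using h0
    · exact h2
  -- second L'Hôpital
  have hf' : ∀ x : ℝ, HasDerivAt (fun y => Real.sin (t * y) - t * Real.sin y)
      (t * Real.cos (t * x) - t * Real.cos x) x := by
    intro x
    have h1 : HasDerivAt (fun y : ℝ => Real.sin (t * y)) (Real.cos (t * x) * t) x :=
      (Real.hasDerivAt_sin (t * x)).comp x ((hasDerivAt_id x).const_mul t) |>.congr_deriv (by ring)
    have := h1.sub ((Real.hasDerivAt_sin x).const_mul t)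
    exact this.congr_deriv (by ring)
  have hg' : ∀ x : ℝ, HasDerivAt (fun y : ℝ => y ^ 3) (3 * x ^ 2) x := by
    intro x
    have := hasDerivAt_pow 3 x
    exact this.congr_deriv (by norm_num)
  apply HasDerivAt.lhopital_zero_nhdsGT
    (Filter.Eventually.of_forall hf') (Filter.Eventually.of_forall hg')
  · exact eventually_nhdsWithin_of_forall fun x hx => by have : (0:ℝ) < x := hx; positivity
  · have : Continuous fun y : ℝ => Real.sin (t * y) - t * Real.sin y := by continuity
    have h0 := (this.tendsto 0).mono_left
      (nhdsWithin_le_nhds : nhdsWithin (0:ℝ) (Set.Ioi 0) ≤ nhds 0)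
    simpa using h0
  · have : Continuous fun y : ℝ => y ^ 3 := by continuity
    have h0 := (this.tendsto 0).mono_left
      (nhdsWithin_le_nhds : nhdsWithin (0:ℝ) (Set.Ioi 0) ≤ nhds 0)
    simpa using h0
  · exact h1

lemma cubic_sinh (t : ℝ) :
    Tendsto (fun x => (Real.sinh (t * x) - t * Real.sinh x) / x ^ 3)
      (nhdsWithin 0 (Set.Ioi 0)) (nhds (-(t * (1 - t ^ 2)) / 6)) := by
  have hle : nhdsWithin (0:ℝ) (Set.Ioi 0) ≤ nhdsWithin 0 {(0:ℝ)}ᶜ :=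
    nhdsWithin_mono 0 (fun x hx => ne_of_gt hx)
  have h2 : Tendsto (fun x => (t ^ 2 * Real.sinh (t * x) - t * Real.sinh x) / (6 * x))
      (nhdsWithin 0 (Set.Ioi 0)) (nhds (-(t * (1 - t ^ 2)) / 6)) := by
    have h := ((((tendsto_sinh_mul_div t).const_mul (t^2)).sub
      ((tendsto_sinh_mul_div 1).const_mul t)).div_const 6).mono_left hle
    have he : ∀ᶠ x in nhdsWithin (0:ℝ) (Set.Ioi 0),
        (t^2 * (Real.sinh (t * x) / x) - t * (Real.sinh (1 * x) / x)) / 6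
          = (t ^ 2 * Real.sinh (t * x) - t * Real.sinh x) / (6 * x) :=
      eventually_nhdsWithin_of_forall fun x hx => by
        rw [one_mul, mul_div_assoc', mul_div_assoc', div_sub_div_same, div_div,
          mul_comm x 6]
    have hv : (t^2 * t - t * 1) / 6 = (-(t * (1 - t ^ 2))) / 6 := by ring
    rw [← hv]
    exact h.congr' he
  have hf'' : ∀ x : ℝ, HasDerivAt (fun y => t * Real.cosh (t * y) - t * Real.cosh y)
      (t ^ 2 * Real.sinh (t * x) - t * Real.sinh x) x := by
    intro x
    have h1 : HasDerivAt (fun y : ℝ => Real.cosh (t * y)) (Real.sinh (t * x) * t) x :=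
      (Real.hasDerivAt_cosh (t * x)).comp x ((hasDerivAt_id x).const_mul t) |>.congr_deriv (by ring)
    have := (h1.const_mul t).sub ((Real.hasDerivAt_cosh x).const_mul t)
    exact this.congr_deriv (by ring)
  have hg'' : ∀ x : ℝ, HasDerivAt (fun y : ℝ => 3 * y ^ 2) (6 * x) x := by
    intro x
    have := (hasDerivAt_pow 2 x).const_mul (3:ℝ)
    exact this.congr_deriv (by norm_num; ring)
  have h1 : Tendsto (fun x => (t * Real.cosh (t * x) - t * Real.cosh x) / (3 * x ^ 2))
      (nhdsWithin 0 (Set.Ioi 0)) (nhds (-(t * (1 - t ^ 2)) / 6)) := by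
    apply HasDerivAt.lhopital_zero_nhdsGT
      (Filter.Eventually.of_forall hf'') (Filter.Eventually.of_forall hg'')
    · exact eventually_nhdsWithin_of_forall fun x hx => by have : (0:ℝ) < x := hx; positivity
    · have : Continuous fun y : ℝ => t * Real.cosh (t * y) - t * Real.cosh y := by continuity
      have h0 := (this.tendsto 0).mono_left
        (nhdsWithin_le_nhds : nhdsWithin (0:ℝ) (Set.Ioi 0) ≤ nhds 0)
      simpa using h0
    · have : Continuous fun y : ℝ => 3 * y ^ 2 := by continuity
      have h0 := (this.tendsto 0).mono_left
        (nhdsWithin_le_nhds : nhdsWithin (0:ℝ) (Set.Ioi 0) ≤ nhds 0)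
      simpa using h0
    · exact h2
  have hf' : ∀ x : ℝ, HasDerivAt (fun y => Real.sinh (t * y) - t * Real.sinh y)
      (t * Real.cosh (t * x) - t * Real.cosh x) x := by
    intro x
    have h1 : HasDerivAt (fun y : ℝ => Real.sinh (t * y)) (Real.cosh (t * x) * t) x :=
      (Real.hasDerivAt_sinh (t * x)).comp x ((hasDerivAt_id x).const_mul t) |>.congr_deriv (by ring)
    have := h1.sub ((Real.hasDerivAt_sinh x).const_mul t)
    exact this.congr_deriv (by ring)
  have hg' : ∀ x : ℝ, HasDerivAt (fun y : ℝ => y ^ 3) (3 * x ^ 2) x := by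
    intro x
    have := hasDerivAt_pow 3 x
    exact this.congr_deriv (by norm_num)
  apply HasDerivAt.lhopital_zero_nhdsGT
    (Filter.Eventually.of_forall hf') (Filter.Eventually.of_forall hg')
  · exact eventually_nhdsWithin_of_forall fun x hx => by have : (0:ℝ) < x := hx; positivity
  · have : Continuous fun y : ℝ => Real.sinh (t * y) - t * Real.sinh y := by continuity
    have h0 := (this.tendsto 0).mono_left
      (nhdsWithin_le_nhds : nhdsWithin (0:ℝ) (Set.Ioi 0) ≤ nhds 0)
    simpa using h0
  · have : Continuous fun y : ℝ => y ^ 3 := by continuity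
    have h0 := (this.tendsto 0).mono_left
      (nhdsWithin_le_nhds : nhdsWithin (0:ℝ) (Set.Ioi 0) ≤ nhds 0)
    simpa using h0
  · exact h1

lemma tendsto_div_sin :
    Tendsto (fun x => x / Real.sin x) (nhdsWithin 0 {(0:ℝ)}ᶜ) (nhds 1) := by
  have h := (tendsto_sin_mul_div 1).inv₀ one_ne_zero
  simp only [one_mul, inv_div, inv_one] at h
  exact h

lemma tendsto_div_sinh :
    Tendsto (fun x => x / Real.sinh x) (nhdsWithin 0 {(0:ℝ)}ᶜ) (nhds 1) := by
  have h := (tendsto_sinh_mul_div 1).inv₀ one_ne_zero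
  simp only [one_mul, inv_div, inv_one] at h
  exact h

lemma tendsto_mul_const_Ioi {s : ℝ} (hs : 0 < s) :
    Tendsto (fun l : ℝ => l * s) (nhdsWithin 0 (Set.Ioi 0)) (nhdsWithin 0 (Set.Ioi 0)) := by
  rw [tendsto_nhdsWithin_iff]
  constructor
  · have hc : Continuous fun l : ℝ => l * s := by continuity
    have := (hc.tendsto (0:ℝ)).mono_left
      (nhdsWithin_le_nhds : nhdsWithin (0:ℝ) (Set.Ioi 0) ≤ nhds 0)
    simpa using this
  · exact eventually_nhdsWithin_of_forall fun x hx => mul_pos hx hs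

lemma alg (t A B l x c : ℝ) (hB : B ≠ 0) (hx : x ≠ 0)
    (hx2 : x ^ 2 = c * l ^ 2) :
    (A / B - t) / l ^ 2 = ((A - t * B) / x ^ 3 * (x / B)) * c := by
  have hl : l ≠ 0 := by
    rintro rfl
    apply hx
    have : x ^ 2 = 0 := by rw [hx2]; ring
    exact pow_eq_zero_iff (n := 2) (by norm_num) |>.mp this
  field_simp
  ring_nf
  linear_combination (A - B * t) * hx2

lemma sigma_lim (Λ t : ℝ) :
    Tendsto (fun l => (sigmaCoeff Λ t l - t) / l ^ 2) (nhdsWithin 0 (Set.Ioi 0))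
      (nhds (t * (1 - t ^ 2) * Λ / 6)) := by
  rcases lt_trichotomy Λ 0 with hΛ | hΛ | hΛ
  · -- Λ < 0 : sinh case
    set s := Real.sqrt (-Λ) with hsdef
    have hs : 0 < s := Real.sqrt_pos.mpr (by linarith)
    have hs2 : s ^ 2 = -Λ := Real.sq_sqrt (by linarith)
    have hm := tendsto_mul_const_Ioi hs
    have hmne : Tendsto (fun l : ℝ => l * s) (nhdsWithin 0 (Set.Ioi 0))
        (nhdsWithin 0 {(0:ℝ)}ᶜ) :=
      hm.mono_right (nhdsWithin_mono 0 fun x hx => ne_of_gt hx)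
    have hA := (cubic_sinh t).comp hm
    have hB := tendsto_div_sinh.comp hmne
    have htot := (hA.mul hB).mul_const (-Λ)
    have hv : (-(t * (1 - t ^ 2)) / 6 * 1) * (-Λ) = t * (1 - t ^ 2) * Λ / 6 := by ring
    rw [hv] at htot
    refine htot.congr' (eventually_nhdsWithin_of_forall fun l hl => ?_)
    have hl0 : (0:ℝ) < l := hl
    have hx0 : 0 < l * s := mul_pos hl0 hs
    have hsh : 0 < Real.sinh (l * s) := Real.sinh_pos_iff.mpr hx0
    have hneg : Λ * l ^ 2 < 0 := mul_neg_of_neg_of_pos hΛ (by positivity)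
    have hσ : sigmaCoeff Λ t l
        = Real.sinh (t * (l * s)) / Real.sinh (l * s) := by
      rw [sigmaCoeff, if_neg (ne_of_lt hneg), if_neg (not_lt.mpr hneg.le)]
    simp only [Function.comp]
    rw [hσ]
    exact (alg t (Real.sinh (t * (l * s))) (Real.sinh (l * s)) l (l * s) (-Λ)
      hsh.ne' hx0.ne' (by rw [mul_pow, hs2]; ring)).symm
  · subst hΛ
    have : ∀ l : ℝ, (sigmaCoeff 0 t l - t) / l ^ 2 = 0 := by
      intro l; simp [sigmaCoeff]
    rw [show t * (1 - t ^ 2) * (0:ℝ) / 6 = 0 by ring]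
    exact Tendsto.congr (fun l => (this l).symm) tendsto_const_nhds
  · -- Λ > 0 : sin case
    set s := Real.sqrt Λ with hsdef
    have hs : 0 < s := Real.sqrt_pos.mpr hΛ
    have hs2 : s ^ 2 = Λ := Real.sq_sqrt hΛ.le
    have hm := tendsto_mul_const_Ioi hs
    have hmne : Tendsto (fun l : ℝ => l * s) (nhdsWithin 0 (Set.Ioi 0))
        (nhdsWithin 0 {(0:ℝ)}ᶜ) :=
      hm.mono_right (nhdsWithin_mono 0 fun x hx => ne_of_gt hx)
    have hA := (cubic_sin t).comp hm
    have hB := tendsto_div_sin.comp hmne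
    have htot := (hA.mul hB).mul_const Λ
    have hv : (t * (1 - t ^ 2) / 6 * 1) * Λ = t * (1 - t ^ 2) * Λ / 6 := by ring
    rw [hv] at htot
    have hmem : Set.Ioo (0:ℝ) (Real.pi / s) ∈ nhdsWithin (0:ℝ) (Set.Ioi 0) :=
      Ioo_mem_nhdsGT_of_mem ⟨le_refl 0, by positivity⟩
    refine htot.congr' (Filter.eventually_of_mem hmem fun l hl => ?_)
    have hl0 : (0:ℝ) < l := hl.1
    have hx0 : 0 < l * s := mul_pos hl0 hs
    have hxπ : l * s < Real.pi := by
      have := hl.2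
      calc l * s < (Real.pi / s) * s := by exact mul_lt_mul_of_pos_right this hs
      _ = Real.pi := by field_simp
    have hsin : 0 < Real.sin (l * s) := Real.sin_pos_of_pos_of_lt_pi hx0 hxπ
    have hpos : 0 < Λ * l ^ 2 := mul_pos hΛ (by positivity)
    have hσ : sigmaCoeff Λ t l
        = Real.sin (t * (l * s)) / Real.sin (l * s) := by
      rw [sigmaCoeff, if_neg (ne_of_gt hpos), if_pos hpos]
    simp only [Function.comp]
    rw [hσ]
    exact (alg t (Real.sin (t * (l * s))) (Real.sin (l * s)) l (l * s) Λ
      hsin.ne' hx0.ne' (by rw [mul_pow, hs2]; ring)).symm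

lemma tau_lim (K N t : ℝ) (hN : 1 < N) (ht : 0 < t) :
    Tendsto (fun l => (tauCoeff K N t l - t) / l ^ 2) (nhdsWithin 0 (Set.Ioi 0))
      (nhds (t * (1 - t ^ 2) * K / (6 * N))) := by
  set Λ := K / (N - 1) with hΛdef
  set p := 1 - 1 / N with hpdef
  set σ := fun l => sigmaCoeff Λ t l with hσdef
  have hN0 : N ≠ 0 := by positivity
  have hN1 : N - 1 ≠ 0 := by intro h; apply hN0; nlinarith [hN]
  have hσlim := sigma_lim Λ t
  -- σ l - t → 0
  have hσ0 : Tendsto (fun l => σ l - t) (nhdsWithin 0 (Set.Ioi 0)) (nhds 0) := by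
    have hsq : Tendsto (fun l : ℝ => l ^ 2) (nhdsWithin 0 (Set.Ioi 0)) (nhds 0) := by
      have hc : Continuous fun l : ℝ => l ^ 2 := by continuity
      have := (hc.tendsto (0:ℝ)).mono_left
        (nhdsWithin_le_nhds : nhdsWithin (0:ℝ) (Set.Ioi 0) ≤ nhds 0)
      simpa using this
    have h := hσlim.mul hsq
    rw [mul_zero] at h
    refine h.congr' (eventually_nhdsWithin_of_forall fun l hl => ?_)
    have hl0 : l ≠ 0 := ne_of_gt hl
    field_simp
    rfl
  -- the difference-quotient function for rpow at t
  set ψ : ℝ → ℝ := fun u => if u = 0 then p * t ^ (p - 1) else ((t + u) ^ p - t ^ p) / u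
    with hψdef
  have hψc : Tendsto ψ (nhds 0) (nhds (p * t ^ (p - 1))) := by
    have hd : HasDerivAt (fun x : ℝ => x ^ p) (p * t ^ (p - 1)) t :=
      Real.hasDerivAt_rpow_const (Or.inl ht.ne')
    have hslope := hasDerivAt_iff_tendsto_slope.mp hd
    have hadd : Tendsto (fun u : ℝ => t + u) (nhdsWithin 0 {(0:ℝ)}ᶜ)
        (nhdsWithin t {(t:ℝ)}ᶜ) := by
      rw [tendsto_nhdsWithin_iff]
      constructor
      · have hc : Continuous fun u : ℝ => t + u := by continuity
        have := (hc.tendsto (0:ℝ)).mono_left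
          (nhdsWithin_le_nhds : nhdsWithin (0:ℝ) {(0:ℝ)}ᶜ ≤ nhds 0)
        simpa using this
      · exact eventually_nhdsWithin_of_forall fun u hu => by
          simp only [Set.mem_compl_iff, Set.mem_singleton_iff] at hu ⊢
          intro h; exact hu (by linarith)
    have h1 := hslope.comp hadd
    have h2 : Tendsto ψ (nhdsWithin 0 {(0:ℝ)}ᶜ) (nhds (p * t ^ (p - 1))) := by
      refine h1.congr' (eventually_nhdsWithin_of_forall fun u hu => ?_)
      have hu0 : u ≠ 0 := hu
      simp only [Function.comp, slope_def_field, hψdef, if_neg hu0]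
      rw [add_sub_cancel_left]
    have h3 : Tendsto ψ (pure (0:ℝ)) (nhds (p * t ^ (p - 1))) := by
      have hv : ψ 0 = p * t ^ (p - 1) := by simp [hψdef]
      have := tendsto_pure_nhds ψ 0
      rwa [hv] at this
    rw [← nhdsNE_sup_pure (0:ℝ)]
    exact h2.sup h3
  -- composition
  have hcomp : Tendsto (fun l => ψ (σ l - t)) (nhdsWithin 0 (Set.Ioi 0))
      (nhds (p * t ^ (p - 1))) := hψc.comp hσ0
  -- pointwise identity
  have hkey : ∀ l : ℝ, (tauCoeff K N t l - t) / l ^ 2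
      = (t ^ (1/N) * ψ (σ l - t)) * ((σ l - t) / l ^ 2) := by
    intro l
    have ht1 : t ^ (1/N) * t ^ p = t := by
      rw [← Real.rpow_add ht, show 1/N + p = 1 by rw [hpdef]; ring, Real.rpow_one]
    have hτ : tauCoeff K N t l = t ^ (1/N) * (σ l) ^ p := rfl
    by_cases h : σ l - t = 0
    · have hσt : σ l = t := by linarith [h]
      rw [hτ, hσt, ht1]
      simp
    · have hψv : ψ (σ l - t) = ((σ l) ^ p - t ^ p) / (σ l - t) := by
        rw [hψdef]
        simp only [if_neg h, add_sub_cancel]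
      rw [hτ, hψv]
      have hs : (σ l ^ p - t ^ p) / (σ l - t) * ((σ l - t) / l ^ 2)
          = (σ l ^ p - t ^ p) / l ^ 2 := by
        rw [div_mul_div_comm, mul_comm (σ l - t) (l ^ 2), mul_div_mul_right _ _ h]
      rw [mul_assoc, hs, mul_div_assoc']
      congr 1
      rw [mul_sub, ht1]
  have htot := (hcomp.const_mul (t ^ (1/N))).mul hσlim
  have hval : t ^ (1/N) * (p * t ^ (p - 1)) * (t * (1 - t ^ 2) * Λ / 6)
      = t * (1 - t ^ 2) * K / (6 * N) := by
    have e1 : t ^ (1/N) * t ^ (p - 1) = 1 := by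
      rw [← Real.rpow_add ht, show 1/N + (p - 1) = 0 by rw [hpdef]; ring, Real.rpow_zero]
    have e2 : p * Λ = K / N := by
      rw [hpdef, hΛdef]
      field_simp
    calc t ^ (1/N) * (p * t ^ (p - 1)) * (t * (1 - t ^ 2) * Λ / 6)
        = (t ^ (1/N) * t ^ (p - 1)) * (p * Λ) * (t * (1 - t ^ 2)) / 6 := by ring
      _ = 1 * (K / N) * (t * (1 - t ^ 2)) / 6 := by rw [e1, e2]
      _ = t * (1 - t ^ 2) * K / (6 * N) := by ring
  rw [hval] at htot
  exact htot.congr fun l => (hkey l).symm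

/-- Expansion of the difference of distortion coefficients:
`τ_{K-δ,N}^{(t)}(λ) = τ_{K,N}^{(t)}(λ) - t(1-t²)(δ/(6N))λ² + o(λ²)` as `λ → 0⁺`. -/
theorem stmt_6 (K N δ t : ℝ) (hN : 1 < N) (hδ : 0 < δ) (ht : t ∈ Set.Icc (0 : ℝ) 1) :
    Filter.Tendsto
      (fun l : ℝ =>
        (tauCoeff (K - δ) N t l - tauCoeff K N t l
          + t * (1 - t ^ 2) * (δ / (6 * N)) * l ^ 2) / l ^ 2)
      (nhdsWithin 0 (Set.Ioi 0)) (nhds 0) := by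
  rcases eq_or_lt_of_le ht.1 with h0 | h0
  · -- t = 0
    have hN0 : (1:ℝ)/N ≠ 0 := by positivity
    have hτ : ∀ K' l : ℝ, tauCoeff K' N t l = 0 := by
      intro K' l
      rw [tauCoeff, ← h0, Real.zero_rpow hN0, zero_mul]
    have : ∀ l : ℝ, (tauCoeff (K - δ) N t l - tauCoeff K N t l
        + t * (1 - t ^ 2) * (δ / (6 * N)) * l ^ 2) / l ^ 2 = 0 := by
      intro l
      rw [hτ, hτ, ← h0]
      ring
    exact Tendsto.congr (fun l => (this l).symm) tendsto_const_nhds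
  · have h1 := tau_lim (K - δ) N t hN h0
    have h2 := tau_lim K N t hN h0
    have h3 := (h1.sub h2).add_const (t * (1 - t ^ 2) * (δ / (6 * N)))
    have hval : t * (1 - t ^ 2) * (K - δ) / (6 * N) - t * (1 - t ^ 2) * K / (6 * N)
        + t * (1 - t ^ 2) * (δ / (6 * N)) = 0 := by ring
    rw [hval] at h3
    refine h3.congr' (eventually_nhdsWithin_of_forall fun l hl => ?_)
    have hl0 : l ≠ 0 := ne_of_gt hl
    have hll : (l:ℝ) ^ 2 ≠ 0 := pow_ne_zero 2 hl0
    rw [← sub_div, div_add' _ _ _ hll]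
    congr 1
    ring
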